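/- arXiv:0909.3416 — 2 statements merged into one kernel-verified Lean document; each statement's English description precedes it below -/
import Mathlib

section
/- Let λ ∈ (−1,0) and n, l, k ∈ ℕ. Then ∫_0^∞ K^λ_{n,n+k}(r)·K^{1/λ}_{l,l+k}(r)·r dr = 1/2 if n = l, and = 0 if n ≠ l. -/
open MeasureTheory Filter

open Finset in
private lemma gsum_eq (u : ℕ) : ∀ (l k : ℕ),
    (∑ v ∈ range (l + 1), (-1 : ℤ) ^ v * (l.choose v) * ((u + k + v).choose u))
      = (-1) ^ l * ((u + k).choose (k + l)) := by
  intro l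
  induction l with
  | zero =>
    intro k
    simp
    exact_mod_cast congrArg (Nat.cast (R := ℤ)) (Nat.choose_symm_add (a := u) (b := k))
  | succ l ih =>
    intro k
    have hf : ∀ v : ℕ, ((u + k + (v + 1)).choose u : ℤ) = ((u + (k+1) + v).choose u : ℤ) := by
      intro v
      norm_cast
      congr 1
      omega
    have key : (∑ v ∈ range (l + 1 + 1), (-1 : ℤ) ^ v * ((l+1).choose v) * ((u + k + v).choose u))
        = (∑ v ∈ range (l + 1), (-1 : ℤ) ^ v * (l.choose v) * ((u + k + v).choose u))
          - (∑ v ∈ range (l + 1), (-1 : ℤ) ^ v * (l.choose v) * ((u + (k+1) + v).choose u)) := by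
      have hW : (∑ v ∈ range (l + 1 + 1), (-1 : ℤ) ^ v * (l.choose v) * ((u + k + v).choose u))
          = (∑ v ∈ range (l + 1), (-1 : ℤ) ^ v * (l.choose v) * ((u + k + v).choose u)) := by
        rw [Finset.sum_range_succ]
        simp [Nat.choose_succ_self]
      rw [Finset.sum_range_succ' (fun v => (-1 : ℤ) ^ v * ((l+1).choose v) * ((u + k + v).choose u)) (l+1)]
      rw [Finset.sum_range_succ' (fun v => (-1 : ℤ) ^ v * (l.choose v) * ((u + k + v).choose u)) (l+1)] at hW
      have expand : ∀ v ∈ range (l+1),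
          (-1 : ℤ) ^ (v+1) * ((l+1).choose (v+1)) * ((u + k + (v+1)).choose u)
            = -((-1 : ℤ) ^ v * (l.choose v) * ((u + (k+1) + v).choose u))
              + ((-1 : ℤ) ^ (v+1) * (l.choose (v+1)) * ((u + k + (v+1)).choose u)) := by
        intro v _
        have h1 : (((l+1).choose (v+1) : ℤ)) = l.choose v + l.choose (v+1) := by
          exact_mod_cast congrArg (Nat.cast (R := ℤ)) (Nat.choose_succ_succ' l v)
        rw [h1]
        rw [show ((u + k + (v + 1)).choose u : ℤ) = ((u + (k+1) + v).choose u : ℤ) from hf v]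
        ring
      rw [Finset.sum_congr rfl expand, Finset.sum_add_distrib]
      have hneg : (∑ v ∈ range (l+1), -((-1 : ℤ) ^ v * (l.choose v) * ((u + (k+1) + v).choose u)))
          = -(∑ v ∈ range (l+1), (-1 : ℤ) ^ v * (l.choose v) * ((u + (k+1) + v).choose u)) :=
        Finset.sum_neg_distrib _
      rw [hneg]
      simp only [pow_zero, Nat.choose_zero_right, Nat.cast_one, one_mul, add_zero] at hW ⊢
      linarith [hW]
    rw [key, ih k, ih (k+1)]
    have hP : ((u + (k+1)).choose ((k+1) + l) : ℤ)
        = ((u + k).choose (k + l) : ℤ) + ((u + k).choose (k + (l+1)) : ℤ) := by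
      have h0 : (u + (k+1)) = (u+k) + 1 := by omega
      have h1 : ((k+1) + l) = (k+l) + 1 := by omega
      have h2 : (k + (l+1)) = (k+l) + 1 := by omega
      rw [h0, h1, h2]
      exact_mod_cast congrArg (Nat.cast (R := ℤ)) (Nat.choose_succ_succ' (u+k) (k+l))
    rw [hP]
    ring

open Finset in
private lemma gsum_eq_real (u l k : ℕ) :
    (∑ v ∈ range (l + 1), (-1 : ℝ) ^ v * (l.choose v) * ((u + k + v).choose u))
      = (-1) ^ l * ((u + k).choose (k + l)) := by
  exact_mod_cast congrArg (Int.cast (R := ℝ)) (gsum_eq u l k)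

open Finset in
private lemma Tsum_eq (l k u : ℕ) :
    (∑ v ∈ range (l + 1),
        (-1 : ℝ) ^ v * ((l + k).choose (l - v)) * ((u + v + k).factorial / v.factorial))
      = (-1) ^ l * (l + k).factorial * u.factorial / l.factorial * ((u + k).choose (k + l)) := by
  have step : ∀ v ∈ range (l + 1),
      (-1 : ℝ) ^ v * ((l + k).choose (l - v)) * ((u + v + k).factorial / v.factorial)
        = ((l + k).factorial * u.factorial / l.factorial) *
            ((-1 : ℝ) ^ v * (l.choose v) * ((u + k + v).choose u)) := by
    intro v hv
    have hv' : v ≤ l := by simpa using Nat.lt_succ_iff.mp (Finset.mem_range.mp hv)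
    have h1 : ((l + k).choose (l - v) : ℝ)
        = (l + k).factorial / ((l - v).factorial * (k + v).factorial) := by
      have hidx : l + k - (l - v) = k + v := by omega
      rw [Nat.cast_choose ℝ (by omega : l - v ≤ l + k), hidx]
    have h2 : ((l).choose v : ℝ) = l.factorial / (v.factorial * (l - v).factorial) :=
      Nat.cast_choose ℝ hv'
    have h3 : ((u + k + v).choose u : ℝ)
        = (u + k + v).factorial / (u.factorial * (k + v).factorial) := by
      have hidx : u + k + v - u = k + v := by omega
      rw [Nat.cast_choose ℝ (by omega : u ≤ u + k + v), hidx]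
    have h4 : ((u + v + k).factorial : ℝ) = ((u + k + v).factorial : ℝ) := by
      norm_cast
      congr 1
      omega
    rw [h1, h2, h3, h4]
    have f1 : ((l - v).factorial : ℝ) ≠ 0 := Nat.cast_ne_zero.mpr (Nat.factorial_ne_zero _)
    have f2 : ((k + v).factorial : ℝ) ≠ 0 := Nat.cast_ne_zero.mpr (Nat.factorial_ne_zero _)
    have f3 : (v.factorial : ℝ) ≠ 0 := Nat.cast_ne_zero.mpr (Nat.factorial_ne_zero _)
    have f4 : (l.factorial : ℝ) ≠ 0 := Nat.cast_ne_zero.mpr (Nat.factorial_ne_zero _)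
    have f5 : (u.factorial : ℝ) ≠ 0 := Nat.cast_ne_zero.mpr (Nat.factorial_ne_zero _)
    field_simp
  rw [Finset.sum_congr rfl step, ← Finset.mul_sum, gsum_eq_real u l k]
  ring

open Finset in
private lemma Ssum_eq (n l k : ℕ) :
    (∑ u ∈ range (n + 1), ∑ v ∈ range (l + 1),
        (-1 : ℝ) ^ (u + v) * ((n + k).choose (n - u)) * ((l + k).choose (l - v)) *
          ((u + v + k).factorial / (u.factorial * v.factorial)))
      = if n = l then ((n + k).factorial / n.factorial : ℝ) else 0 := by
  have hfact : ∀ m : ℕ, (m.factorial : ℝ) ≠ 0 :=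
    fun m => Nat.cast_ne_zero.mpr (Nat.factorial_ne_zero _)
  have inner : ∀ u : ℕ,
      (∑ v ∈ range (l + 1),
          (-1 : ℝ) ^ (u + v) * ((n + k).choose (n - u)) * ((l + k).choose (l - v)) *
            ((u + v + k).factorial / (u.factorial * v.factorial)))
        = (-1 : ℝ) ^ (u + l) * ((n + k).choose (n - u)) *
            ((l + k).factorial / l.factorial) * ((u + k).choose (k + l)) := by
    intro u
    have expand : ∀ v ∈ range (l + 1),
        (-1 : ℝ) ^ (u + v) * ((n + k).choose (n - u)) * ((l + k).choose (l - v)) *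
            ((u + v + k).factorial / (u.factorial * v.factorial))
          = ((-1 : ℝ) ^ u * ((n + k).choose (n - u)) / u.factorial) *
              ((-1 : ℝ) ^ v * ((l + k).choose (l - v)) * ((u + v + k).factorial / v.factorial)) := by
      intro v _
      rw [pow_add]
      field_simp
    rw [Finset.sum_congr rfl expand, ← Finset.mul_sum, Tsum_eq l k u]
    rw [pow_add]
    field_simp
  by_cases h : n = l
  · subst h
    rw [if_pos rfl]
    have zeros : ∀ u ∈ range n,
        (∑ v ∈ range (n + 1),
          (-1 : ℝ) ^ (u + v) * ((n + k).choose (n - u)) * ((n + k).choose (n - v)) *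
            ((u + v + k).factorial / (u.factorial * v.factorial))) = 0 := by
      intro u hu
      rw [inner u]
      have : (u + k).choose (k + n) = 0 :=
        Nat.choose_eq_zero_of_lt (by have := Finset.mem_range.mp hu; omega)
      rw [this]
      simp
    rw [Finset.sum_range_succ, Finset.sum_eq_zero zeros, zero_add, inner n]
    have h1 : (-1 : ℝ) ^ (n + n) = 1 := Even.neg_one_pow ⟨n, rfl⟩
    have h2 : (n + k).choose (n - n) = 1 := by simp
    have h3 : (n + k).choose (k + n) = 1 := by rw [add_comm k n]; exact Nat.choose_self _
    rw [h1, h2, h3]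
    simp
  · rw [if_neg h]
    rcases Nat.lt_or_ge n l with hlt | hge
    · apply Finset.sum_eq_zero
      intro u hu
      rw [inner u]
      have : (u + k).choose (k + l) = 0 :=
        Nat.choose_eq_zero_of_lt (by have := Finset.mem_range.mp hu; omega)
      rw [this]
      simp
    · have hlt : l < n := by omega
      rw [Finset.sum_comm]
      apply Finset.sum_eq_zero
      intro v hv
      have expand : ∀ u ∈ range (n + 1),
          (-1 : ℝ) ^ (u + v) * ((n + k).choose (n - u)) * ((l + k).choose (l - v)) *
              ((u + v + k).factorial / (u.factorial * v.factorial))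
            = ((-1 : ℝ) ^ v * ((l + k).choose (l - v)) / v.factorial) *
                ((-1 : ℝ) ^ u * ((n + k).choose (n - u)) * ((v + u + k).factorial / u.factorial)) := by
        intro u _
        have hidx : ((u + v + k).factorial : ℝ) = ((v + u + k).factorial : ℝ) := by
          norm_cast
          congr 1
          omega
        rw [pow_add, hidx]
        field_simp
      rw [Finset.sum_congr rfl expand, ← Finset.mul_sum, Tsum_eq n k v]
      have : (v + k).choose (k + n) = 0 :=
        Nat.choose_eq_zero_of_lt (by have := Finset.mem_range.mp hv; omega)
      rw [this]
      simp

private lemma integ_pow_exp {b : ℝ} (hb : 0 < b) (j : ℕ) :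
    IntegrableOn (fun r : ℝ => r ^ j * Real.exp (-b * r ^ 2)) (Set.Ioi 0) := by
  have h := integrableOn_rpow_mul_exp_neg_mul_sq hb (s := (j : ℝ))
    (by have : (0:ℝ) ≤ j := Nat.cast_nonneg j; linarith)
  simpa only [Real.rpow_natCast] using h

private lemma moment {b : ℝ} (hb : 0 < b) (m : ℕ) :
    (∫ r in Set.Ioi (0:ℝ), r ^ (2*m+1) * Real.exp (-b * r ^ 2))
      = m.factorial / (2 * b ^ (m+1)) := by
  have key := integral_rpow_mul_exp_neg_mul_rpow (p := 2) (q := 2*(m:ℝ)+1)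
    two_pos (by have : (0:ℝ) ≤ m := Nat.cast_nonneg m; linarith) hb
  have hiq : (∫ r in Set.Ioi (0:ℝ), r ^ (2*m+1) * Real.exp (-b * r ^ 2))
      = ∫ x in Set.Ioi (0:ℝ), x ^ (2*(m:ℝ)+1) * Real.exp (-b * x ^ (2:ℝ)) := by
    apply setIntegral_congr_fun measurableSet_Ioi
    intro x hx
    dsimp only
    have h1 : x ^ (2*(m:ℝ)+1) = x ^ (2*m+1 : ℕ) := by
      rw [show (2*(m:ℝ)+1) = ((2*m+1 : ℕ) : ℝ) by push_cast; ring, Real.rpow_natCast]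
    have h2 : x ^ (2:ℝ) = x ^ (2:ℕ) := by
      rw [show ((2:ℝ)) = ((2:ℕ) : ℝ) by norm_num, Real.rpow_natCast]
    rw [h1, h2]
  rw [hiq, key]
  have h3 : (-(2*(m:ℝ)+1+1)/2) = -((m:ℝ)+1) := by ring
  have h4 : ((2*(m:ℝ)+1+1)/2) = (m:ℝ)+1 := by ring
  rw [h3, h4]
  have h5 : b ^ (-((m:ℝ)+1)) = (b ^ (m+1 : ℕ))⁻¹ := by
    rw [Real.rpow_neg hb.le]
    congr 1
    rw [show ((m:ℝ)+1) = ((m+1 : ℕ) : ℝ) by push_cast; ring, Real.rpow_natCast]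
  have h6 : Real.Gamma ((m:ℝ)+1) = m.factorial := by
    exact_mod_cast Real.Gamma_nat_eq_factorial m
  rw [h5, h6]
  ring

private lemma term_eq (lam : ℝ) (hl : lam ≠ 0) (h1 : (1:ℝ) - lam ≠ 0)
    (s t c1 c2 F : ℝ) (k u v n l : ℕ) (hu : u ≤ n) (hv : v ≤ l)
    (fu fv : ℝ) (hfu : fu ≠ 0) (hfv : fv ≠ 0) :
    (-1:ℝ)^(u+v) *
      ((s * (1-lam)^(k+1) * (lam^(n-u)/fu) * c1 * (1-lam)^(2*u)) *
       (t * (1-1/lam)^(k+1) * ((1/lam)^(l-v)/fv) * c2 * (1-1/lam)^(2*v)) *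
       (F/(2*((1-lam)*(1-1/lam))^(u+v+k+1))))
    = (s*t*lam^n/lam^l/2) * (c1*c2*(F/(fu*fv))) := by
  have hμ : (1:ℝ)/lam ≠ 0 := one_div_ne_zero hl
  rw [pow_sub₀ lam hl hu, pow_sub₀ (1/lam) hμ hv]
  have hrw : (1:ℝ) - 1/lam = -((1-lam) * (1/lam)) := by field_simp; ring
  rw [hrw]
  have hnp : ∀ m : ℕ, (-((1-lam) * (1/lam)))^m = (-1:ℝ)^m * ((1-lam)^m * (1/lam)^m) := by
    intro m
    rw [neg_pow, mul_pow]
  simp only [mul_pow, hnp]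
  have hsq : ∀ m : ℕ, (-1:ℝ)^(2*m) = 1 := by
    intro m
    rw [pow_mul]
    norm_num
  simp only [hsq, one_mul]
  rw [show u+v+k+1 = (k+1)+(u+v) from by ring]
  simp only [pow_add]
  field_simp
  simp only [one_div, inv_pow]
  field_simp
  ring

/-- The function `K^λ_{n,n+k}(r) = √(n!/(n+k)!) (1−λ)^{k+1} e^{−(1−λ)r²} r^k
·∑_{u=0}^n (λ^{n−u}/u!) C(n+k, n−u) (1−λ)^{2u} r^{2u}`. -/
noncomputable def Kfun (lam : ℂ) (n k : ℕ) (r : ℝ) : ℂ :=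
  ((Real.sqrt ((n.factorial : ℝ) / ((n + k).factorial : ℝ)) : ℝ) : ℂ) * (1 - lam) ^ (k + 1) *
    Complex.exp (-(1 - lam) * (r : ℂ) ^ 2) * (r : ℂ) ^ k *
    ∑ u ∈ Finset.range (n + 1),
      (lam ^ (n - u) / (u.factorial : ℂ)) * (((n + k).choose (n - u) : ℕ) : ℂ) *
        (1 - lam) ^ (2 * u) * (r : ℂ) ^ (2 * u)

/-- Real-valued version of `Kfun` for real parameter. -/
noncomputable def KR (t : ℝ) (n k : ℕ) (r : ℝ) : ℝ :=
  Real.sqrt ((n.factorial : ℝ) / ((n + k).factorial : ℝ)) * (1 - t) ^ (k + 1) *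
    Real.exp (-(1 - t) * r ^ 2) * r ^ k *
    ∑ u ∈ Finset.range (n + 1),
      (t ^ (n - u) / (u.factorial : ℝ)) * (((n + k).choose (n - u) : ℕ) : ℝ) *
        (1 - t) ^ (2 * u) * r ^ (2 * u)

private lemma Kfun_ofReal (t : ℝ) (n k : ℕ) (r : ℝ) :
    Kfun (t : ℂ) n k r = ((KR t n k r : ℝ) : ℂ) := by
  unfold Kfun KR
  push_cast
  ring

open Finset in
private lemma KR_mul (lam : ℝ) (hl : lam ≠ 0) (n l k : ℕ) (r : ℝ) :
    KR lam n k r * KR (1/lam) l k r * r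
      = ∑ u ∈ range (n + 1), ∑ v ∈ range (l + 1),
          ((Real.sqrt ((n.factorial : ℝ) / ((n + k).factorial : ℝ)) * (1 - lam) ^ (k + 1) *
              (lam ^ (n - u) / (u.factorial : ℝ)) * ((n + k).choose (n - u)) * (1 - lam) ^ (2 * u))
            * (Real.sqrt ((l.factorial : ℝ) / ((l + k).factorial : ℝ)) * (1 - 1/lam) ^ (k + 1) *
              ((1/lam) ^ (l - v) / (v.factorial : ℝ)) * ((l + k).choose (l - v)) * (1 - 1/lam) ^ (2 * v)))
          * (r ^ (2 * (u + v + k) + 1) * Real.exp (-((1 - lam) * (1 - 1/lam)) * r ^ 2)) := by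
  have hE : Real.exp (-(1 - lam) * r ^ 2) * Real.exp (-(1 - 1/lam) * r ^ 2)
      = Real.exp (-((1 - lam) * (1 - 1/lam)) * r ^ 2) := by
    rw [← Real.exp_add]
    congr 1
    field_simp
    ring
  calc KR lam n k r * KR (1/lam) l k r * r
      = ((∑ u ∈ range (n + 1),
            (lam ^ (n - u) / (u.factorial : ℝ)) * (((n + k).choose (n - u) : ℕ) : ℝ) *
              (1 - lam) ^ (2 * u) * r ^ (2 * u)) *
          (∑ v ∈ range (l + 1),
            ((1/lam) ^ (l - v) / (v.factorial : ℝ)) * (((l + k).choose (l - v) : ℕ) : ℝ) *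
              (1 - 1/lam) ^ (2 * v) * r ^ (2 * v))) *
          (Real.sqrt ((n.factorial : ℝ) / ((n + k).factorial : ℝ)) *
            Real.sqrt ((l.factorial : ℝ) / ((l + k).factorial : ℝ)) *
            (1 - lam) ^ (k + 1) * (1 - 1/lam) ^ (k + 1) * r ^ k * r ^ k * r *
            (Real.exp (-(1 - lam) * r ^ 2) * Real.exp (-(1 - 1/lam) * r ^ 2))) := by
        unfold KR; ring
    _ = ∑ u ∈ range (n + 1), ∑ v ∈ range (l + 1), _ := by
        rw [hE, Finset.sum_mul_sum, Finset.sum_mul]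
        refine Finset.sum_congr rfl fun u hu => ?_
        rw [Finset.sum_mul]
        refine Finset.sum_congr rfl fun v hv => ?_
        ring

/-- Orthogonality: for `λ ∈ (−1,0)`,
`∫_0^∞ K^λ_{n,n+k}(r) K^{1/λ}_{l,l+k}(r) r dr = (1/2)·δ_{nl}`. -/
theorem stmt_9 (lam : ℝ) (hlam : lam ∈ Set.Ioo (-1 : ℝ) 0) (n l k : ℕ) :
    (∫ r in Set.Ioi (0 : ℝ),
        Kfun (lam : ℂ) n k r * Kfun (1 / (lam : ℂ)) l k r * (r : ℂ)) =
      if n = l then (1 / 2 : ℂ) else 0 := by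
  obtain ⟨ha, hb⟩ := hlam
  have hl0 : lam ≠ 0 := ne_of_lt hb
  have h1l : (0:ℝ) < 1 - lam := by linarith
  have h1l' : (1:ℝ) - lam ≠ 0 := ne_of_gt h1l
  have hμpos : (0:ℝ) < 1 - 1/lam := by
    have : 1/lam < 0 := div_neg_of_pos_of_neg one_pos hb
    linarith
  have hc : (0:ℝ) < (1 - lam) * (1 - 1/lam) := mul_pos h1l hμpos
  have hfact : ∀ m : ℕ, (m.factorial : ℝ) ≠ 0 :=
    fun m => Nat.cast_ne_zero.mpr (Nat.factorial_ne_zero _)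
  -- reduce to a real integral
  have hcast : (1 / (lam:ℂ)) = ((1/lam : ℝ) : ℂ) := by push_cast; ring
  have hpt : ∀ r : ℝ, Kfun (lam:ℂ) n k r * Kfun (1/(lam:ℂ)) l k r * (r:ℂ)
      = ((KR lam n k r * KR (1/lam) l k r * r : ℝ) : ℂ) := by
    intro r
    rw [hcast, Kfun_ofReal, Kfun_ofReal]
    push_cast
    ring
  simp only [hpt]
  rw [show (∫ r in Set.Ioi (0:ℝ), ((KR lam n k r * KR (1/lam) l k r * r : ℝ) : ℂ))
      = ((∫ r in Set.Ioi (0:ℝ), KR lam n k r * KR (1/lam) l k r * r : ℝ) : ℂ) from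
    integral_ofReal]
  -- compute the real integral
  have hint : (∫ r in Set.Ioi (0:ℝ), KR lam n k r * KR (1/lam) l k r * r)
      = ∑ u ∈ Finset.range (n + 1), ∑ v ∈ Finset.range (l + 1),
          ((Real.sqrt ((n.factorial : ℝ) / ((n + k).factorial : ℝ)) * (1 - lam) ^ (k + 1) *
              (lam ^ (n - u) / (u.factorial : ℝ)) * ((n + k).choose (n - u)) * (1 - lam) ^ (2 * u))
            * (Real.sqrt ((l.factorial : ℝ) / ((l + k).factorial : ℝ)) * (1 - 1/lam) ^ (k + 1) *
              ((1/lam) ^ (l - v) / (v.factorial : ℝ)) * ((l + k).choose (l - v)) * (1 - 1/lam) ^ (2 * v)))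
          * (((u + v + k).factorial : ℝ) / (2 * ((1 - lam) * (1 - 1/lam)) ^ (u + v + k + 1))) := by
    simp only [KR_mul lam hl0 n l k]
    rw [integral_finset_sum]
    swap
    · intro u _
      apply integrable_finset_sum
      intro v _
      exact ((integ_pow_exp hc (2*(u+v+k)+1)).const_mul _)
    refine Finset.sum_congr rfl fun u hu => ?_
    rw [integral_finset_sum]
    swap
    · intro v _
      exact ((integ_pow_exp hc (2*(u+v+k)+1)).const_mul _)
    refine Finset.sum_congr rfl fun v hv => ?_
    rw [MeasureTheory.integral_const_mul, moment hc (u+v+k)]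
  rw [hint]
  -- evaluate the double sum
  have hterm : ∀ u ∈ Finset.range (n + 1), ∀ v ∈ Finset.range (l + 1),
      ((Real.sqrt ((n.factorial : ℝ) / ((n + k).factorial : ℝ)) * (1 - lam) ^ (k + 1) *
          (lam ^ (n - u) / (u.factorial : ℝ)) * ((n + k).choose (n - u)) * (1 - lam) ^ (2 * u))
        * (Real.sqrt ((l.factorial : ℝ) / ((l + k).factorial : ℝ)) * (1 - 1/lam) ^ (k + 1) *
          ((1/lam) ^ (l - v) / (v.factorial : ℝ)) * ((l + k).choose (l - v)) * (1 - 1/lam) ^ (2 * v)))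
      * (((u + v + k).factorial : ℝ) / (2 * ((1 - lam) * (1 - 1/lam)) ^ (u + v + k + 1)))
      = (Real.sqrt ((n.factorial : ℝ) / ((n + k).factorial : ℝ)) *
          Real.sqrt ((l.factorial : ℝ) / ((l + k).factorial : ℝ)) * lam ^ n / lam ^ l / 2) *
        ((-1:ℝ) ^ (u + v) * ((n + k).choose (n - u)) * ((l + k).choose (l - v)) *
          ((u + v + k).factorial / (u.factorial * v.factorial))) := by
    intro u hu v hv
    have hu' : u ≤ n := Nat.lt_succ_iff.mp (Finset.mem_range.mp hu)
    have hv' : v ≤ l := Nat.lt_succ_iff.mp (Finset.mem_range.mp hv)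
    have h := term_eq lam hl0 h1l'
      (Real.sqrt ((n.factorial : ℝ) / ((n + k).factorial : ℝ)))
      (Real.sqrt ((l.factorial : ℝ) / ((l + k).factorial : ℝ)))
      (((n + k).choose (n - u) : ℝ)) (((l + k).choose (l - v) : ℝ))
      (((u + v + k).factorial : ℝ)) k u v n l hu' hv'
      ((u.factorial : ℝ)) ((v.factorial : ℝ)) (hfact u) (hfact v)
    have hs : (-1:ℝ)^(u+v) * (-1:ℝ)^(u+v) = 1 := by
      rw [← pow_add]
      exact Even.neg_one_pow ⟨u+v, by ring⟩
    have h2 := congrArg (fun z => (-1:ℝ)^(u+v) * z) h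
    rw [← mul_assoc, hs, one_mul] at h2
    rw [h2]
    ring
  rw [Finset.sum_congr rfl fun u hu => Finset.sum_congr rfl fun v hv => hterm u hu v hv]
  simp only [← Finset.mul_sum]
  rw [Ssum_eq n l k]
  by_cases h : n = l
  · subst h
    rw [if_pos rfl, if_pos rfl]
    have hsq : Real.sqrt ((n.factorial : ℝ) / ((n + k).factorial : ℝ)) *
        Real.sqrt ((n.factorial : ℝ) / ((n + k).factorial : ℝ))
        = (n.factorial : ℝ) / ((n + k).factorial : ℝ) :=
      Real.mul_self_sqrt (by positivity)
    have hpow : lam ^ n ≠ 0 := pow_ne_zero _ hl0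
    rw [hsq]
    have : (n.factorial : ℝ) / ((n + k).factorial : ℝ) * lam ^ n / lam ^ n / 2 *
        (((n + k).factorial : ℝ) / (n.factorial : ℝ)) = 1/2 := by
      field_simp
    rw [this]
    norm_num
  · rw [if_neg h, if_neg h, mul_zero]
    norm_num
end

section
/- Let λ ∈ ℂ with λ ≠ 0 and λ ≠ 1, let z ∈ ℂ with z ≠ 0, and let β ∈ ℂ with |β| < |(λ^{−1} − 1)·z|. For m, n ∈ ℕ define L_n^{(m−n)}(x) := ∑_{u=0}^n ((−1)^u/u!)·C(m, n−u)·x^u, where C(m, j) is the binomial coefficient (equal to 0 when j > m). Then for each m ∈ ℕ the series over n below converges absolutely, the resulting series over m converges, and (1−λ)·exp((λ−1)·|β−z|²) = (1−λ)·e^{−|β|² + (λ−1)·|z|²}·∑_{m=0}^∞ ∑_{n=0}^∞ (β^m·(conj β)^n/m!)·((1−λ)·conj(z))^{m−n}·λ^n·L_n^{(m−n)}(−(1−λ)²·|z|²/λ), where ((1−λ)·conj(z))^{m−n} denotes the integer power in ℂ (well defined since (1−λ)·conj(z) ≠ 0). -/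
open Filter

/-- The associated Laguerre polynomial `L_n^{(m−n)}(x) = ∑_{u=0}^n ((−1)^u/u!) C(m, n−u) x^u`
(with `C(m, j) = 0` for `j > m`). -/
noncomputable def Lag (m n : ℕ) (x : ℂ) : ℂ :=
  ∑ u ∈ Finset.range (n + 1), ((-1 : ℂ) ^ u / (u.factorial : ℂ)) * ((m.choose (n - u) : ℕ) : ℂ) * x ^ u

/-- The general term of the Cahill–Glauber double series. -/
noncomputable def cgTerm (lam z β : ℂ) (m n : ℕ) : ℂ :=
  (β ^ m * (starRingEnd ℂ) β ^ n / (m.factorial : ℂ)) *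
    ((1 - lam) * (starRingEnd ℂ) z) ^ ((m : ℤ) - (n : ℤ)) * lam ^ n *
    Lag m n (-(1 - lam) ^ 2 * ((‖z‖ : ℝ) : ℂ) ^ 2 / lam)

open Finset in
noncomputable def cgA (lam z β : ℂ) (m k : ℕ) : ℂ :=
  (β ^ m / (m.factorial : ℂ)) * ((m.choose k : ℕ) : ℂ) * (lam * (starRingEnd ℂ) β) ^ k *
    ((1 - lam) * (starRingEnd ℂ) z) ^ ((m : ℤ) - (k : ℤ))

noncomputable def cgB (lam z β : ℂ) (u : ℕ) : ℂ :=
  ((starRingEnd ℂ) β * ((1 - lam) * z)) ^ u / (u.factorial : ℂ)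

lemma cg_key (lam z β : ℂ) (h0 : lam ≠ 0) (h1' : (1 : ℂ) - lam ≠ 0) (hz : z ≠ 0) (m n : ℕ) :
    cgTerm lam z β m n =
      ∑ k ∈ Finset.range (n + 1), cgA lam z β m k * cgB lam z β (n - k) := by
  have hzc : (starRingEnd ℂ) z ≠ 0 := by simpa using hz
  have hw : (1 - lam) * (starRingEnd ℂ) z ≠ 0 := mul_ne_zero h1' hzc
  have hzz : ((‖z‖ : ℝ) : ℂ) ^ 2 = (starRingEnd ℂ) z * z := by
    rw [← Complex.ofReal_pow, Complex.sq_norm, Complex.normSq_eq_conj_mul_self]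
  rw [← Finset.sum_range_reflect]
  unfold cgTerm Lag
  rw [Finset.mul_sum]
  refine Finset.sum_congr rfl fun u hu => ?_
  have hu' : u ≤ n := Nat.lt_succ_iff.mp (Finset.mem_range.mp hu)
  obtain ⟨k, rfl⟩ : ∃ k, n = k + u := ⟨n - u, (Nat.sub_add_cancel hu').symm⟩
  have h₁ : k + u + 1 - 1 - u = k := by omega
  have h₃ : k + u - u = k := by omega
  have h₄ : k + u - k = u := by omega
  rw [h₁, h₃, h₄]
  have hpow : ((1 - lam) * (starRingEnd ℂ) z) ^ ((m : ℤ) - ((k + u : ℕ) : ℤ)) =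
      ((1 - lam) * (starRingEnd ℂ) z) ^ ((m : ℤ) - (k : ℤ)) *
        (((1 - lam) * (starRingEnd ℂ) z) ^ u)⁻¹ := by
    rw [show ((m : ℤ) - ((k + u : ℕ) : ℤ)) = ((m : ℤ) - (k : ℤ)) + (-(u : ℤ)) by push_cast; ring,
      zpow_add₀ hw, zpow_neg, zpow_natCast]
  rw [hpow, hzz]
  unfold cgA cgB
  rw [show ∀ a b : ℂ, -a ^ 2 * b / lam = (-a) * a * b / lam from fun a b => by ring]
  generalize hgen : (1 : ℂ) - lam = μ at *
  have hfu : ((u.factorial : ℕ) : ℂ) ≠ 0 := Nat.cast_ne_zero.mpr u.factorial_ne_zero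
  have hfm : ((m.factorial : ℕ) : ℂ) ≠ 0 := Nat.cast_ne_zero.mpr m.factorial_ne_zero
  field_simp
  ring_nf
  simp only [mul_comm u 2, pow_mul, neg_one_sq, one_pow, mul_one]
  have hl : lam ^ u * lam⁻¹ ^ u = 1 := by rw [← mul_pow, mul_inv_cancel₀ h0, one_pow]
  linear_combination (β ^ m * (starRingEnd ℂ) β ^ k * (starRingEnd ℂ) β ^ u * lam ^ k *
    ((m.choose k : ℕ) : ℂ) * (μ ^ 2) ^ u * (starRingEnd ℂ) z ^ u * z ^ u) * hl


lemma cgA_supp (lam z β : ℂ) (m : ℕ) : ∀ k ∉ Finset.range (m + 1), cgA lam z β m k = 0 := by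
  intro k hk
  have hmk : m < k := by simpa [Nat.lt_succ_iff, not_le] using hk
  simp [cgA, Nat.choose_eq_zero_of_lt hmk]

lemma habs2 (w : ℂ) : ((‖w‖ : ℝ) : ℂ) ^ 2 = (starRingEnd ℂ) w * w := by
  rw [← Complex.ofReal_pow, Complex.sq_norm, Complex.normSq_eq_conj_mul_self]


/-- The Cahill–Glauber formula: for `λ ≠ 0, 1`, `z ≠ 0` and `|β| < |(λ⁻¹−1)z|`,
each series over `n` converges absolutely, the resulting series over `m` converges, and
`(1−λ) exp((λ−1)|β−z|²) = (1−λ) e^{−|β|²+(λ−1)|z|²} ∑_m ∑_n (β^m conj(β)^n/m!)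
((1−λ)conj(z))^{m−n} λ^n L_n^{(m−n)}(−(1−λ)²|z|²/λ)`. -/
theorem stmt_19 (lam : ℂ) (h0 : lam ≠ 0) (h1 : lam ≠ 1) (z : ℂ) (hz : z ≠ 0)
    (β : ℂ) (hβ : ‖β‖ < ‖(lam⁻¹ - 1) * z‖) :
    (∀ m : ℕ, Summable fun n : ℕ => ‖cgTerm lam z β m n‖) ∧
    ∃ S : ℂ,
      Tendsto (fun N => ∑ m ∈ Finset.range N, ∑' n : ℕ, cgTerm lam z β m n) atTop (nhds S) ∧
      (1 - lam) * Complex.exp ((lam - 1) * ((‖β - z‖ : ℝ) : ℂ) ^ 2) =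
        (1 - lam) *
          Complex.exp (-((‖β‖ : ℝ) : ℂ) ^ 2 + (lam - 1) * ((‖z‖ : ℝ) : ℂ) ^ 2) *
          S := by

  have h1' : (1 : ℂ) - lam ≠ 0 := sub_ne_zero.mpr (Ne.symm h1)
  have hzc : (starRingEnd ℂ) z ≠ 0 := by simpa using hz
  have hw : (1 - lam) * (starRingEnd ℂ) z ≠ 0 := mul_ne_zero h1' hzc
  have hAnorm : ∀ m, Summable fun k => ‖cgA lam z β m k‖ := fun m =>
    summable_of_ne_finset_zero (s := Finset.range (m + 1)) fun k hk => by
      rw [cgA_supp lam z β m k hk, norm_zero]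
  have hBnorm : Summable fun u => ‖cgB lam z β u‖ := by
    refine (Real.summable_pow_div_factorial
      ‖(starRingEnd ℂ) β * ((1 - lam) * z)‖).congr fun u => ?_
    simp [cgB, norm_div, norm_pow, Complex.norm_natCast]
  have hsum1 : ∀ m, Summable fun n => ‖cgTerm lam z β m n‖ := by
    intro m
    refine (summable_norm_sum_mul_range_of_summable_norm (hAnorm m) hBnorm).congr fun n => ?_
    rw [← cg_key lam z β h0 h1' hz m n]
  refine ⟨hsum1, ?_⟩
  set c1 : ℂ := β * (lam * (starRingEnd ℂ) β + (1 - lam) * (starRingEnd ℂ) z) with hc1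
  set c2 : ℂ := (starRingEnd ℂ) β * ((1 - lam) * z) with hc2
  have htsumB : ∑' u, cgB lam z β u = Complex.exp c2 := by
    rw [Complex.exp_eq_exp_ℂ, NormedSpace.exp_eq_tsum_div]
    exact tsum_congr fun u => by simp [cgB, hc2]
  have htsumA : ∀ m, ∑' k, cgA lam z β m k = (β ^ m / (m.factorial : ℂ)) *
      (lam * (starRingEnd ℂ) β + (1 - lam) * (starRingEnd ℂ) z) ^ m := by
    intro m
    rw [tsum_eq_sum (cgA_supp lam z β m)]
    rw [add_pow, Finset.mul_sum]
    refine Finset.sum_congr rfl fun k hk => ?_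
    have hk' : k ≤ m := Nat.lt_succ_iff.mp (Finset.mem_range.mp hk)
    unfold cgA
    rw [show ((m : ℤ) - (k : ℤ)) = (((m - k : ℕ) : ℕ) : ℤ) by omega, zpow_natCast]
    ring
  have hT : ∀ m, ∑' n, cgTerm lam z β m n = (c1 ^ m / (m.factorial : ℂ)) * Complex.exp c2 := by
    intro m
    calc ∑' n, cgTerm lam z β m n
        = ∑' n, ∑ k ∈ Finset.range (n + 1), cgA lam z β m k * cgB lam z β (n - k) :=
          tsum_congr (cg_key lam z β h0 h1' hz m)
      _ = (∑' k, cgA lam z β m k) * ∑' u, cgB lam z β u :=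
          (tsum_mul_tsum_eq_tsum_sum_range_of_summable_norm (hAnorm m) hBnorm).symm
      _ = (c1 ^ m / (m.factorial : ℂ)) * Complex.exp c2 := by
          rw [htsumA m, htsumB, hc1, mul_pow]; ring
  refine ⟨Complex.exp c1 * Complex.exp c2, ?_, ?_⟩
  · have hs : HasSum (fun m => (c1 ^ m / (m.factorial : ℂ)) * Complex.exp c2)
        (Complex.exp c1 * Complex.exp c2) := by
      have := NormedSpace.expSeries_div_hasSum_exp (𝔸 := ℂ) c1
      rw [← Complex.exp_eq_exp_ℂ] at this
      exact this.mul_right _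
    refine hs.tendsto_sum_nat.congr fun N => ?_
    exact Finset.sum_congr rfl fun m _ => (hT m).symm
  · rw [mul_assoc, ← Complex.exp_add, ← Complex.exp_add]
    congr 2
    rw [habs2, habs2, habs2, map_sub, hc1, hc2]
    ring
end
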